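/- In the 2-colouring of {2,...,N} with red class R = [2, √(N/2)] ∪ (N/2, N] and blue class B = (√(N/2), N/2], every monochromatic solution (x, y, z) to x·y = z (with 2 ≤ x, y, z ≤ N, all the same colour) satisfies x, y, z ∈ [2, √(N/2)]. -/
import Mathlib


theorem stmt_12 (N : ℕ) (hN : 8 ≤ N) (x y z : ℕ)
    (hx : 2 ≤ x ∧ x ≤ N) (hy : 2 ≤ y ∧ y ≤ N) (hz : 2 ≤ z ∧ z ≤ N)
    (heq : x * y = z)
    (hmono :
      (((x : ℝ) ≤ Real.sqrt (N / 2) ∨ (N : ℝ) / 2 < x) ∧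
       ((y : ℝ) ≤ Real.sqrt (N / 2) ∨ (N : ℝ) / 2 < y) ∧
       ((z : ℝ) ≤ Real.sqrt (N / 2) ∨ (N : ℝ) / 2 < z)) ∨
      ((Real.sqrt (N / 2) < (x : ℝ) ∧ (x : ℝ) ≤ (N : ℝ) / 2) ∧
       (Real.sqrt (N / 2) < (y : ℝ) ∧ (y : ℝ) ≤ (N : ℝ) / 2) ∧
       (Real.sqrt (N / 2) < (z : ℝ) ∧ (z : ℝ) ≤ (N : ℝ) / 2))) :
    (x : ℝ) ≤ Real.sqrt (N / 2) ∧ (y : ℝ) ≤ Real.sqrt (N / 2) ∧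
    (z : ℝ) ≤ Real.sqrt (N / 2) := by
  obtain ⟨hx1, hx2⟩ := hx
  obtain ⟨hy1, hy2⟩ := hy
  obtain ⟨hz1, hz2⟩ := hz
  have hs : Real.sqrt ((N : ℝ) / 2) * Real.sqrt ((N : ℝ) / 2) = (N : ℝ) / 2 :=
    Real.mul_self_sqrt (by positivity)
  have hzxy : (z : ℝ) = (x : ℝ) * (y : ℝ) := by exact_mod_cast heq.symm
  have hx1' : (2 : ℝ) ≤ x := by exact_mod_cast hx1
  have hy1' : (2 : ℝ) ≤ y := by exact_mod_cast hy1
  have hz2' : (z : ℝ) ≤ N := by exact_mod_cast hz2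
  have hsnn := Real.sqrt_nonneg ((N : ℝ) / 2)
  rcases hmono with ⟨hxr, hyr, hzr⟩ | ⟨⟨hxb, _⟩, ⟨hyb, _⟩, ⟨_, hzb⟩⟩
  · rcases hxr with hxr | hxr
    · rcases hyr with hyr | hyr
      · refine ⟨hxr, hyr, ?_⟩
        rcases hzr with h | h
        · exact h
        · exfalso
          have : (z : ℝ) ≤ (N : ℝ) / 2 := by
            rw [hzxy, ← hs]
            exact mul_le_mul hxr hyr (by linarith) hsnn
          linarith
      · exfalso; nlinarith
    · exfalso; nlinarith
  · exfalso
    have h1 : (N : ℝ) / 2 < (x : ℝ) * y := by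
      rw [← hs]; exact mul_lt_mul'' hxb hyb hsnn hsnn
    linarith [hzxy ▸ h1]
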